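/- Let f₁, …, f_n : ℝ^d → ℝ be differentiable, convex, and each L-smooth, and let f(x) = (1/n)∑_{j=1}^n f_j(x). Then for all x, x̃ ∈ ℝ^d: (1/n)∑_{j=1}^n ‖∇f_j(x) − ∇f_j(x̃)‖² ≤ 2L·[f(x̃) − f(x) − ⟨∇f(x), x̃ − x⟩]. -/

import Mathlib

open scoped BigOperators RealInnerProductSpace

open Set

variable {E : Type*} [NormedAddCommGroup E] [InnerProductSpace ℝ E] [CompleteSpace E]

lemma line_hasDerivAt' {f : E → ℝ} {gp : E} {x v : E} {t : ℝ}
    (h : HasGradientAt f gp (x + t • v)) :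
    HasDerivAt (fun s : ℝ => f (x + s • v)) ⟪gp, v⟫ t := by
  have hline : HasDerivAt (fun s : ℝ => x + s • v) v t := by
    simpa using ((hasDerivAt_id t).smul_const v).const_add x
  have := (h.hasFDerivAt).comp_hasDerivAt t hline
  simpa [InnerProductSpace.toDual_apply_apply, Function.comp_def] using this

lemma convex_first_order' {f : E → ℝ} {gx : E} {x : E}
    (hconv : ConvexOn ℝ univ f) (h : HasGradientAt f gx x) (y : E) :
    f x + ⟪gx, y - x⟫ ≤ f y := by
  set v := y - x with hv
  have hφ : ConvexOn ℝ univ (fun t : ℝ => f (x + t • v)) := by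
    refine ⟨convex_univ, fun a _ b _ p q hp hq hpq => ?_⟩
    have h2 := hconv.2 (mem_univ (x + a • v)) (mem_univ (x + b • v)) hp hq hpq
    have hx : p • (x + a • v) + q • (x + b • v) = x + (p * a + q * b) • v := by
      calc p • (x + a • v) + q • (x + b • v) = (p + q) • x + (p * a + q * b) • v := by
            module
        _ = x + (p * a + q * b) • v := by rw [hpq, one_smul]
    rw [hx] at h2
    simpa [smul_eq_mul] using h2
  have hd : HasDerivAt (fun t : ℝ => f (x + t • v)) ⟪gx, v⟫ 0 :=
    line_hasDerivAt' (by simpa using h)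
  have hs := hφ.le_slope_of_hasDerivAt (mem_univ (0:ℝ)) (mem_univ (1:ℝ)) one_pos hd
  rw [slope_def_field] at hs
  simp only [one_smul, zero_smul, add_zero, sub_zero, div_one] at hs
  have h1 : x + v = y := by rw [hv]; abel
  rw [h1] at hs
  linarith

lemma descent_lemma' {f : E → ℝ} {g : E → E} {L : ℝ}
    (hgrad : ∀ z, HasGradientAt f (g z) z)
    (hsmooth : ∀ a b, ‖g a - g b‖ ≤ L * ‖a - b‖) (x y : E) :
    f y ≤ f x + ⟪g x, y - x⟫ + L / 2 * ‖y - x‖ ^ 2 := by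
  set v := y - x with hv
  set ψ : ℝ → ℝ := fun t => f x + t * ⟪g x, v⟫ + L / 2 * t ^ 2 * ‖v‖ ^ 2 - f (x + t • v) with hψ
  have hder : ∀ t : ℝ, HasDerivAt ψ (⟪g x, v⟫ + L * t * ‖v‖ ^ 2 - ⟪g (x + t • v), v⟫) t := by
    intro t
    have h1 : HasDerivAt (fun s : ℝ => f (x + s • v)) ⟪g (x + t • v), v⟫ t :=
      line_hasDerivAt' (hgrad _)
    have ha : HasDerivAt (fun s : ℝ => s * ⟪g x, v⟫) ⟪g x, v⟫ t := by
      simpa using (hasDerivAt_id t).mul_const (⟪g x, v⟫ : ℝ)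
    have hb : HasDerivAt (fun s : ℝ => L / 2 * s ^ 2 * ‖v‖ ^ 2) (L * t * ‖v‖ ^ 2) t := by
      have := ((hasDerivAt_pow 2 t).const_mul (L / 2)).mul_const (‖v‖ ^ 2)
      refine this.congr_deriv ?_
      ring
    have h2 := ((ha.const_add (f x)).add hb).sub h1
    exact h2
  have hmono : MonotoneOn ψ (Icc (0:ℝ) 1) := by
    apply monotoneOn_of_deriv_nonneg (convex_Icc 0 1)
    · exact fun t _ => ((hder t).continuousAt).continuousWithinAt
    · exact fun t _ => ((hder t).differentiableAt).differentiableWithinAt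
    · intro t ht
      rw [interior_Icc] at ht
      rw [(hder t).deriv]
      have hip : ⟪g (x + t • v) - g x, v⟫ ≤ L * t * ‖v‖ ^ 2 := by
        calc ⟪g (x + t • v) - g x, v⟫ ≤ ‖g (x + t • v) - g x‖ * ‖v‖ :=
              real_inner_le_norm _ _
          _ ≤ (L * ‖(x + t • v) - x‖) * ‖v‖ :=
              mul_le_mul_of_nonneg_right (hsmooth _ _) (norm_nonneg _)
          _ = L * t * ‖v‖ ^ 2 := by
              rw [add_sub_cancel_left, norm_smul, Real.norm_eq_abs, abs_of_pos ht.1]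
              ring
      have hsub : ⟪g (x + t • v) - g x, v⟫ = ⟪g (x + t • v), v⟫ - ⟪g x, v⟫ :=
        inner_sub_left _ _ _
      linarith
  have h01 := hmono (left_mem_Icc.mpr zero_le_one) (right_mem_Icc.mpr zero_le_one) zero_le_one
  have hψ0 : ψ 0 = 0 := by simp [hψ]
  have hψ1 : ψ 1 = f x + ⟪g x, v⟫ + L / 2 * ‖v‖ ^ 2 - f y := by
    simp only [hψ, one_smul, one_pow, mul_one, one_mul]
    rw [show x + v = y by rw [hv]; abel]
  rw [hψ0, hψ1] at h01
  linarith

lemma coco' {f : E → ℝ} {g : E → E} {L : ℝ} (hL : 0 < L)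
    (hgrad : ∀ z, HasGradientAt f (g z) z) (hconv : ConvexOn ℝ univ f)
    (hsmooth : ∀ a b, ‖g a - g b‖ ≤ L * ‖a - b‖) (x y : E) :
    ‖g x - g y‖ ^ 2 ≤ 2 * L * (f y - f x - ⟪g x, y - x⟫) := by
  set h : E → ℝ := fun z => f z - ⟪g x, z⟫ with hh
  have hlin : ∀ z : E, HasGradientAt (fun w : E => (⟪g x, w⟫ : ℝ)) (g x) z := by
    intro z
    rw [hasGradientAt_iff_hasFDerivAt]
    exact (InnerProductSpace.toDual ℝ E (g x)).hasFDerivAt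
  have hgradh : ∀ z, HasGradientAt h (g z - g x) z := by
    intro z
    rw [hasGradientAt_iff_hasFDerivAt]
    have := (hgrad z).hasFDerivAt.sub ((hlin z).hasFDerivAt)
    rwa [← map_sub] at this
  have hconvh : ConvexOn ℝ univ h := by
    apply hconv.sub
    refine ⟨convex_univ, fun a _ b _ p q hp hq hpq => ?_⟩
    rw [inner_add_right, real_inner_smul_right, real_inner_smul_right]
    simp [smul_eq_mul]
  have hsm : ∀ a b : E, ‖(g a - g x) - (g b - g x)‖ ≤ L * ‖a - b‖ := by
    intro a b
    rw [sub_sub_sub_cancel_right]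
    exact hsmooth a b
  have hmin : ∀ z : E, h x ≤ h z := by
    intro z
    have := convex_first_order' hconvh (hgradh x) z
    simpa using this
  set w : E := y - L⁻¹ • (g y - g x) with hw
  have hdesc := descent_lemma' hgradh hsm y w
  have hwy : w - y = -(L⁻¹ • (g y - g x)) := by rw [hw]; abel
  have hi1 : ⟪g y - g x, w - y⟫ = -(L⁻¹ * ‖g y - g x‖ ^ 2) := by
    rw [hwy, inner_neg_right, real_inner_smul_right, real_inner_self_eq_norm_sq]
  have hn1 : ‖w - y‖ ^ 2 = L⁻¹ ^ 2 * ‖g y - g x‖ ^ 2 := by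
    rw [hwy, norm_neg, norm_smul, Real.norm_eq_abs, abs_of_pos (inv_pos.mpr hL), mul_pow]
  rw [hi1, hn1] at hdesc
  have hmw := hmin w
  have hhy : h y - h x = f y - f x - ⟪g x, y - x⟫ := by
    simp only [hh]
    rw [inner_sub_right]
    ring
  have hnorm : ‖g y - g x‖ = ‖g x - g y‖ := norm_sub_rev _ _
  have hL' : L ≠ 0 := ne_of_gt hL
  have key : L⁻¹ / 2 * ‖g x - g y‖ ^ 2 ≤ h y - h x := by
    rw [← hnorm]
    have : L / 2 * (L⁻¹ ^ 2 * ‖g y - g x‖ ^ 2) = L⁻¹ / 2 * ‖g y - g x‖ ^ 2 := by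
      field_simp
    rw [this] at hdesc
    clear_value h w
    linarith [hdesc, hmw]
  rw [hhy] at key
  have h2L : ‖g x - g y‖ ^ 2 ≤ 2 * L * (L⁻¹ / 2 * ‖g x - g y‖ ^ 2) := by
    rw [show 2 * L * (L⁻¹ / 2 * ‖g x - g y‖ ^ 2) = (L * L⁻¹) * ‖g x - g y‖ ^ 2 by ring,
      mul_inv_cancel₀ hL', one_mul]
  calc ‖g x - g y‖ ^ 2 ≤ 2 * L * (L⁻¹ / 2 * ‖g x - g y‖ ^ 2) := h2L
    _ ≤ 2 * L * (f y - f x - ⟪g x, y - x⟫) := by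
        apply mul_le_mul_of_nonneg_left key (by positivity)

/-- **Bregman-divergence bound for convex smooth components.** If each `f j` is differentiable,
convex and `L`-smooth, and `f = (1/n)∑ f j` has gradient `gF`, then
`(1/n)∑_j ‖∇f_j(x) - ∇f_j(x̃)‖² ≤ 2L[f(x̃) - f(x) - ⟨∇f(x), x̃ - x⟩]`. -/
theorem convex_smooth_bregman_bound
    {d n : ℕ} (hn : 0 < n) (L : ℝ)
    (f : Fin n → EuclideanSpace ℝ (Fin d) → ℝ)
    (g : Fin n → EuclideanSpace ℝ (Fin d) → EuclideanSpace ℝ (Fin d))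
    (hgrad : ∀ j x, HasGradientAt (f j) (g j x) x)
    (hconv : ∀ j, ConvexOn ℝ Set.univ (f j))
    (hsmooth : ∀ j x y, ‖g j x - g j y‖ ≤ L * ‖x - y‖)
    (gF : EuclideanSpace ℝ (Fin d) → EuclideanSpace ℝ (Fin d))
    (hgF : ∀ x, HasGradientAt (fun y => (n : ℝ)⁻¹ * ∑ j, f j y) (gF x) x)
    (x xt : EuclideanSpace ℝ (Fin d)) :
    (n : ℝ)⁻¹ * ∑ j, ‖g j x - g j xt‖ ^ 2 ≤
      2 * L * ((n : ℝ)⁻¹ * ∑ j, f j xt - (n : ℝ)⁻¹ * ∑ j, f j x - ⟪gF x, xt - x⟫) := by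
  by_cases hxy : x = xt
  · subst hxy
    simp
  · have j0 : Fin n := ⟨0, hn⟩
    have hL0 : 0 ≤ L := by
      have h1 := hsmooth j0 x xt
      have h2 : 0 < ‖x - xt‖ := by
        rw [norm_pos_iff]
        exact sub_ne_zero_of_ne hxy
      nlinarith [norm_nonneg (g j0 x - g j0 xt)]
    -- gradient of the average
    have hgFx : gF x = (n : ℝ)⁻¹ • ∑ j, g j x := by
      refine (hgF x).unique ?_
      rw [hasGradientAt_iff_hasFDerivAt, map_smul, map_sum]
      have hsum : HasFDerivAt (fun y => ∑ j, f j y)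
          (∑ j, (InnerProductSpace.toDual ℝ _ (g j x) : _ →L[ℝ] ℝ)) x :=
        HasFDerivAt.fun_sum fun j _ => (hgrad j x).hasFDerivAt
      have := hsum.const_mul ((n : ℝ)⁻¹)
      convert this using 1
    have hinner : ⟪gF x, xt - x⟫ = (n : ℝ)⁻¹ * ∑ j, ⟪g j x, xt - x⟫ := by
      rw [hgFx, real_inner_smul_left, sum_inner]
    rcases hL0.eq_or_lt with hL | hL
    · have hg0 : ∀ j, g j x = g j xt := by
        intro j
        have h1 := hsmooth j x xt
        rw [← hL, zero_mul] at h1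
        rw [← sub_eq_zero]
        exact norm_le_zero_iff.mp h1
      simp [hg0, ← hL]
    · have hkey : ∀ j, ‖g j x - g j xt‖ ^ 2 ≤ 2 * L * (f j xt - f j x - ⟪g j x, xt - x⟫) :=
        fun j => coco' hL (hgrad j) (hconv j) (hsmooth j) x xt
      have hsb : ∑ j, ‖g j x - g j xt‖ ^ 2 ≤
          ∑ j, 2 * L * (f j xt - f j x - ⟪g j x, xt - x⟫) :=
        Finset.sum_le_sum fun j _ => hkey j
      have hn' : (0 : ℝ) ≤ (n : ℝ)⁻¹ := by positivity
      have hmain := mul_le_mul_of_nonneg_left hsb hn'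
      rw [hinner]
      calc (n : ℝ)⁻¹ * ∑ j, ‖g j x - g j xt‖ ^ 2
          ≤ (n : ℝ)⁻¹ * ∑ j, 2 * L * (f j xt - f j x - ⟪g j x, xt - x⟫) := hmain
        _ = 2 * L * ((n : ℝ)⁻¹ * ∑ j, f j xt - (n : ℝ)⁻¹ * ∑ j, f j x -
              (n : ℝ)⁻¹ * ∑ j, ⟪g j x, xt - x⟫) := by
            rw [← Finset.mul_sum, Finset.sum_sub_distrib, Finset.sum_sub_distrib]
            ring
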